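/- The canonical monoid homomorphism from the free monoid on p generators to the generalized Thompson group F(p), sending the i-th free generator to x_i for 0 ≤ i ≤ p−1, is injective. In other words, x_0, x_1, …, x_{p-1} generate a free submonoid of rank p in F(p): two positive words in x_0, …, x_{p-1} are equal in F(p) only if they are identical words. -/

import Mathlib

/-- Relators of the generalized Thompson group `F(p)`. -/
def ThompsonRels (p : ℕ) : Set (FreeGroup ℕ) :=
  {r | ∃ i j : ℕ, i < j ∧
    r = FreeGroup.of j * FreeGroup.of i * (FreeGroup.of (j + p - 1))⁻¹ * (FreeGroup.of i)⁻¹}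

/-- The generalized Thompson group `F(p)` as a presented group. -/
abbrev FP (p : ℕ) := PresentedGroup (ThompsonRels p)

/-- The generator `x_i` of `F(p)`. -/
def xgen (p : ℕ) (i : ℕ) : FP p := PresentedGroup.of i

namespace Stmt15Aux

/-- Piecewise linear map of ℚ realizing a Thompson generator. -/
def g (p : ℕ) (a : ℚ) (t : ℚ) : ℚ :=
  if t ≤ a then t else if t ≤ a + p then a + (t - a) / p else t - (p - 1)

/-- Inverse of `g`. -/
def ginv (p : ℕ) (a : ℚ) (t : ℚ) : ℚ :=
  if t ≤ a then t else if t ≤ a + 1 then a + p * (t - a) else t + (p - 1)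

variable {p : ℕ}

lemma hpQ (hp : 2 ≤ p) : (2:ℚ) ≤ (p:ℚ) := by exact_mod_cast hp

lemma g_low {a t : ℚ} (h : t ≤ a) : g p a t = t := by
  unfold g; rw [if_pos h]

lemma g_mid (hp : 2 ≤ p) {a t : ℚ} (h1 : a ≤ t) (h2 : t ≤ a + p) :
    g p a t = a + (t - a) / p := by
  unfold g
  split_ifs with k1
  · have h' : t = a := le_antisymm k1 h1
    rw [h']; simp
  · rfl

lemma g_tail (hp : 2 ≤ p) {a t : ℚ} (h : a + p ≤ t) : g p a t = t - ((p:ℚ) - 1) := by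
  have h2 := hpQ hp
  have hpne : (p:ℚ) ≠ 0 := by linarith
  unfold g
  split_ifs with k1 k2
  · linarith
  · have h' : t = a + p := le_antisymm k2 h
    rw [h']; field_simp; ring
  · rfl

lemma g_left_inv (hp : 2 ≤ p) (a t : ℚ) : ginv p a (g p a t) = t := by
  have h2 := hpQ hp
  have hp0 : (0:ℚ) < p := by linarith
  have hpne : (p:ℚ) ≠ 0 := ne_of_gt hp0
  rcases le_or_gt t a with h | h
  · rw [g_low h]; unfold ginv; rw [if_pos h]
  · rcases le_or_gt t (a + p) with h' | h'
    · rw [g_mid hp h.le h']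
      have hd0 : 0 < (t - a) / p := div_pos (by linarith) hp0
      have hd1 : (t - a) / p ≤ 1 := by
        rw [div_le_one hp0]; linarith
      unfold ginv
      rw [if_neg (by linarith), if_pos (by linarith)]
      field_simp
      ring
    · rw [g_tail hp (by linarith)]
      unfold ginv
      rw [if_neg (by linarith), if_neg (by linarith)]
      ring

lemma g_right_inv (hp : 2 ≤ p) (a t : ℚ) : g p a (ginv p a t) = t := by
  have h2 := hpQ hp
  have hp0 : (0:ℚ) < p := by linarith
  have hpne : (p:ℚ) ≠ 0 := ne_of_gt hp0
  rcases le_or_gt t a with h | h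
  · unfold ginv; rw [if_pos h]; exact g_low h
  · rcases le_or_gt t (a + 1) with h' | h'
    · unfold ginv
      rw [if_neg (by linarith), if_pos h']
      rw [g_mid hp (by nlinarith) (by nlinarith)]
      field_simp
      ring
    · unfold ginv
      rw [if_neg (by linarith), if_neg (by linarith)]
      rw [g_tail hp (by linarith)]
      ring

/-- `g` as a permutation of ℚ. -/
def gE (hp : 2 ≤ p) (a : ℚ) : Equiv.Perm ℚ :=
  ⟨g p a, ginv p a, g_left_inv hp a, g_right_inv hp a⟩

lemma gE_apply (hp : 2 ≤ p) (a t : ℚ) : gE hp a t = g p a t := rfl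

/-- The Thompson relation for the PL maps. -/
lemma g_rel (hp : 2 ≤ p) (a b : ℚ) (hab : a + 1 ≤ b) (t : ℚ) :
    g p b (g p a t) = g p a (g p (b + p - 1) t) := by
  have h2 := hpQ hp
  have hp0 : (0:ℚ) < p := by linarith
  set c : ℚ := b + p - 1 with hc
  rcases le_or_gt t a with r1 | _r1
  · rw [g_low r1, g_low (by linarith : t ≤ b), g_low (by linarith : t ≤ c), g_low r1]
  · rcases le_or_gt t (a + p) with r2 | _r2
    · rw [g_mid hp (by linarith) r2]
      have hd0 : 0 ≤ (t - a) / p := div_nonneg (by linarith) (by linarith)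
      have hd1 : (t - a) / p ≤ 1 := by rw [div_le_one hp0]; linarith
      rw [g_low (by linarith : a + (t - a) / p ≤ b)]
      rw [g_low (by linarith : t ≤ c), g_mid hp (by linarith) r2]
    · rcases le_or_gt t c with r3 | _r3
      · rw [g_tail hp (by linarith : a + p ≤ t)]
        rw [g_low (by linarith : t - ((p:ℚ)-1) ≤ b)]
        rw [g_low r3, g_tail hp (by linarith : a + p ≤ t)]
      · rcases le_or_gt t (c + p) with r4 | _r4
        · rw [g_tail hp (by linarith : a + p ≤ t)]
          rw [g_mid hp (by linarith : b ≤ t - ((p:ℚ)-1)) (by linarith)]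
          rw [g_mid hp (by linarith : c ≤ t) r4]
          have hd0 : 0 ≤ (t - c) / p := div_nonneg (by linarith) (by linarith)
          have hd1 : (t - c) / p ≤ 1 := by rw [div_le_one hp0]; linarith
          rw [g_tail hp (by linarith : a + p ≤ c + (t - c) / p)]
          have : t - ((p:ℚ)-1) - b = t - c := by rw [hc]; ring
          rw [this]; ring
        · rw [g_tail hp (by linarith : a + p ≤ t)]
          rw [g_tail hp (by linarith : b + p ≤ t - ((p:ℚ)-1))]
          rw [g_tail hp (by linarith : c + p ≤ t)]
          rw [g_tail hp (by linarith : a + p ≤ t - ((p:ℚ)-1))]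

/-- pointwise lower bound for `g`. -/
lemma g_lb (hp : 2 ≤ p) (a s : ℚ) : s - ((p:ℚ) - 1) ≤ g p a s := by
  have h2 := hpQ hp
  have hp0 : (0:ℚ) < p := by linarith
  rcases le_or_gt s a with h | h
  · rw [g_low h]; linarith
  · rcases le_or_gt s (a + p) with h' | h'
    · rw [g_mid hp h.le h']
      have hd1 : (s - a) / p ≤ 1 := by rw [div_le_one hp0]; linarith
      have hu : (s - a) / p * p = s - a := div_mul_cancel₀ _ (ne_of_gt hp0)
      nlinarith
    · rw [g_tail hp h'.le]

/-- strict pointwise lower bound for `g` in the non-trivial region. -/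
lemma g_lb' (hp : 2 ≤ p) {a s : ℚ} (h : s < a + p) : s - ((p:ℚ) - 1) < g p a s := by
  have h2 := hpQ hp
  have hp0 : (0:ℚ) < p := by linarith
  rcases le_or_gt s a with h1 | h1
  · rw [g_low h1]; linarith
  · rw [g_mid hp h1.le h.le]
    have hd1 : (s - a) / p < 1 := by rw [div_lt_one hp0]; linarith
    have hu : (s - a) / p * p = s - a := div_mul_cancel₀ _ (ne_of_gt hp0)
    nlinarith

/-- Action of a word (list of generators among `x_0 … x_{p-1}`) on ℚ. -/
def Fw (p : ℕ) : List (Fin p) → ℚ → ℚ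
  | [], t => t
  | a :: l, t => g p ((a : ℕ) : ℚ) (Fw p l t)

/-- Threshold beyond which a word acts as a translation. -/
def tau (p : ℕ) : List (Fin p) → ℚ
  | [] => 0
  | a :: l => ((a : ℕ) : ℚ) + p + l.length * ((p:ℚ) - 1)

lemma tau_le (hp : 2 ≤ p) (l : List (Fin p)) :
    tau p l ≤ (p:ℚ) + l.length * ((p:ℚ) - 1) := by
  have h2 := hpQ hp
  cases l with
  | nil => simp [tau]
  | cons a l =>
      have ha : ((a : ℕ) : ℚ) ≤ (p:ℚ) - 1 := by
        have := a.isLt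
        have : ((a:ℕ):ℚ) + 1 ≤ (p:ℚ) := by exact_mod_cast this
        linarith
      simp only [tau, List.length_cons]
      push_cast
      nlinarith

lemma tau_nonneg (hp : 2 ≤ p) (l : List (Fin p)) : 0 ≤ tau p l := by
  have h2 := hpQ hp
  cases l with
  | nil => simp [tau]
  | cons a l =>
      simp only [tau]
      have ha : (0:ℚ) ≤ ((a:ℕ):ℚ) := by positivity
      have hl : (0:ℚ) ≤ (l.length : ℚ) := by positivity
      nlinarith

/-- Lemma A: beyond the threshold, a word acts as translation by `len⬝(p-1)`. -/
lemma Fw_tail (hp : 2 ≤ p) :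
    ∀ (l : List (Fin p)) (t : ℚ), tau p l ≤ t →
      Fw p l t = t - l.length * ((p:ℚ) - 1) := by
  have h2 := hpQ hp
  intro l
  induction l with
  | nil => intro t _; simp [Fw]
  | cons a l IH =>
      intro t ht
      have ha : (0:ℚ) ≤ ((a:ℕ):ℚ) := by positivity
      have htau : tau p (a :: l) = ((a:ℕ):ℚ) + p + l.length * ((p:ℚ) - 1) := rfl
      rw [htau] at ht
      have h1 : tau p l ≤ t := by
        have := tau_le hp l
        linarith
      show g p ((a:ℕ):ℚ) (Fw p l t) = t - (l.length + 1 : ℕ) * ((p:ℚ) - 1)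
      rw [IH t h1, g_tail hp (by linarith : ((a:ℕ):ℚ) + p ≤ t - l.length * ((p:ℚ) - 1))]
      push_cast
      ring

/-- Lemma B: strictly below the threshold, a word moves points strictly less. -/
lemma Fw_lb (hp : 2 ≤ p) :
    ∀ (l : List (Fin p)) (a : Fin p) (t : ℚ), t < tau p (a :: l) →
      t - (l.length + 1) * ((p:ℚ) - 1) < Fw p (a :: l) t := by
  have h2 := hpQ hp
  intro l
  induction l with
  | nil =>
      intro a t ht
      have htau : tau p (a :: ([] : List (Fin p))) = ((a:ℕ):ℚ) + p + 0 * ((p:ℚ)-1) := rfl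
      rw [htau] at ht
      have := g_lb' hp (a := ((a:ℕ):ℚ)) (s := t) (by linarith)
      show t - ((0:ℕ) + 1 : ℚ) * ((p:ℚ) - 1) < g p ((a:ℕ):ℚ) (Fw p [] t)
      simp only [Fw]
      push_cast
      linarith
  | cons b l IH =>
      intro a t ht
      have htau : tau p (a :: b :: l) = ((a:ℕ):ℚ) + p + (l.length + 1 : ℕ) * ((p:ℚ)-1) := by
        simp [tau]
      rw [htau] at ht
      show t - ((b :: l).length + 1 : ℚ) * ((p:ℚ) - 1) < g p ((a:ℕ):ℚ) (Fw p (b :: l) t)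
      rcases le_or_gt (tau p (b :: l)) t with hc | hc
      · have hA := Fw_tail hp (b :: l) t hc
        set s := Fw p (b :: l) t with hs
        have hslt : s < ((a:ℕ):ℚ) + p := by
          rw [hA]
          simp only [List.length_cons]
          push_cast at ht ⊢
          linarith
        have := g_lb' hp (a := ((a:ℕ):ℚ)) hslt
        rw [hA] at this ⊢
        simp only [List.length_cons] at *
        push_cast at *
        linarith
      · have hB := IH b t hc
        have := g_lb hp ((a:ℕ):ℚ) (Fw p (b :: l) t)
        simp only [List.length_cons] at *
        push_cast at *
        linarith

/-- Words acting identically on ℚ are equal. -/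
lemma Fw_inj (hp : 2 ≤ p) :
    ∀ l₁ l₂ : List (Fin p), (∀ t, Fw p l₁ t = Fw p l₂ t) → l₁ = l₂ := by
  have h2 := hpQ hp
  have hlen : ∀ l₁ l₂ : List (Fin p), (∀ t, Fw p l₁ t = Fw p l₂ t) →
      l₁.length = l₂.length := by
    intro l₁ l₂ h
    set T := max (tau p l₁) (tau p l₂) with hT
    have e1 := Fw_tail hp l₁ T (le_max_left _ _)
    have e2 := Fw_tail hp l₂ T (le_max_right _ _)
    rw [h T, e2] at e1
    have : (l₁.length : ℚ) * ((p:ℚ) - 1) = (l₂.length : ℚ) * ((p:ℚ) - 1) := by linarith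
    have : (l₁.length : ℚ) = (l₂.length : ℚ) := by
      have hpm : (p:ℚ) - 1 ≠ 0 := by linarith
      exact mul_right_cancel₀ hpm this
    exact_mod_cast this
  intro l₁
  induction l₁ with
  | nil =>
      intro l₂ h
      cases l₂ with
      | nil => rfl
      | cons b l₂ => exact absurd (hlen _ _ h) (by simp)
  | cons a l₁ IH =>
      intro l₂ h
      cases l₂ with
      | nil => exact absurd (hlen _ _ h) (by simp)
      | cons b l₂ =>
          have hll : l₁.length = l₂.length := by
            have := hlen _ _ h; simpa using this
          have hab : (a : ℕ) = (b : ℕ) := by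
            by_contra hne
            rcases lt_or_gt_of_ne hne with hlt | hgt
            · have hltQ : ((a:ℕ):ℚ) < ((b:ℕ):ℚ) := by exact_mod_cast hlt
              set t := tau p (a :: l₁) with htdef
              have e1 := Fw_tail hp (a :: l₁) t le_rfl
              have ht2 : t < tau p (b :: l₂) := by
                simp only [htdef, tau, hll]
                linarith
              have e2 := Fw_lb hp l₂ b t ht2
              rw [← h t, e1] at e2
              simp only [List.length_cons, hll] at e2 ⊢
              push_cast at e2
              linarith
            · have hltQ : ((b:ℕ):ℚ) < ((a:ℕ):ℚ) := by exact_mod_cast hgt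
              set t := tau p (b :: l₂) with htdef
              have e1 := Fw_tail hp (b :: l₂) t le_rfl
              have ht2 : t < tau p (a :: l₁) := by
                simp only [htdef, tau, hll]
                linarith
              have e2 := Fw_lb hp l₁ a t ht2
              rw [h t, e1] at e2
              simp only [List.length_cons, hll] at e2 ⊢
              push_cast at e2
              linarith
          have hab' : a = b := Fin.ext hab
          subst hab'
          congr 1
          apply IH
          intro t
          have := h t
          have hinj : Function.Injective (g p ((a:ℕ):ℚ)) := (gE hp ((a:ℕ):ℚ)).injective
          exact hinj this

/-- The action of `F(p)` on ℚ by PL homeomorphisms. -/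
noncomputable def toPerm (hp : 2 ≤ p) : FP p →* Equiv.Perm ℚ :=
  PresentedGroup.toGroup (f := fun n : ℕ => gE hp (n : ℚ)) (by
    rintro r ⟨i, j, hij, rfl⟩
    simp only [map_mul, map_inv, FreeGroup.lift_apply_of]
    have h1 : 1 ≤ j + p := by omega
    have hcast : ((j + p - 1 : ℕ) : ℚ) = (j : ℚ) + (p : ℚ) - 1 := by
      rw [Nat.cast_sub h1]
      push_cast
      ring
    have key : gE hp (j : ℚ) * gE hp (i : ℚ)
        = gE hp (i : ℚ) * gE hp (((j + p - 1 : ℕ) : ℚ)) := by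
      apply Equiv.ext
      intro t
      simp only [Equiv.Perm.mul_apply, gE_apply]
      rw [hcast]
      exact g_rel hp _ _ (by exact_mod_cast hij) t
    rw [key]
    group)

lemma toPerm_of (hp : 2 ≤ p) (n : ℕ) : toPerm hp (xgen p n) = gE hp (n : ℚ) :=
  PresentedGroup.toGroup.of _

end Stmt15Aux

theorem stmt15 (p : ℕ) (hp : 2 ≤ p) :
    Function.Injective
      (FreeMonoid.lift (fun i : Fin p => xgen p (i : ℕ)) :
        FreeMonoid (Fin p) →* FP p) := by
  classical
  have comp : (Stmt15Aux.toPerm hp).comp (FreeMonoid.lift (fun i : Fin p => xgen p (i : ℕ)))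
      = FreeMonoid.lift (fun i : Fin p => Stmt15Aux.gE hp (((i : ℕ)) : ℚ)) := by
    apply FreeMonoid.hom_eq
    intro x
    simp only [MonoidHom.comp_apply, FreeMonoid.lift_eval_of]
    exact Stmt15Aux.toPerm_of hp (x : ℕ)
  have eval : ∀ (l : List (Fin p)) (t : ℚ),
      (FreeMonoid.lift (fun i : Fin p => Stmt15Aux.gE hp (((i : ℕ)) : ℚ))
        (FreeMonoid.ofList l)) t = Stmt15Aux.Fw p l t := by
    intro l
    induction l with
    | nil => intro t; simp [Stmt15Aux.Fw]
    | cons a l IH =>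
        intro t
        rw [FreeMonoid.ofList_cons, map_mul]
        simp only [Equiv.Perm.mul_apply, FreeMonoid.lift_eval_of]
        rw [IH]
        rfl
  intro w v h
  have hperm : (FreeMonoid.lift (fun i : Fin p => Stmt15Aux.gE hp (((i : ℕ)) : ℚ))) w
      = (FreeMonoid.lift (fun i : Fin p => Stmt15Aux.gE hp (((i : ℕ)) : ℚ))) v := by
    rw [← comp]
    simp only [MonoidHom.comp_apply]
    exact congrArg _ h
  have hfun : ∀ t, Stmt15Aux.Fw p (FreeMonoid.toList w) t
      = Stmt15Aux.Fw p (FreeMonoid.toList v) t := by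
    intro t
    rw [← eval (FreeMonoid.toList w) t, ← eval (FreeMonoid.toList v) t,
      FreeMonoid.ofList_toList, FreeMonoid.ofList_toList]
    exact congrArg (fun σ : Equiv.Perm ℚ => σ t) hperm
  exact FreeMonoid.toList.injective (Stmt15Aux.Fw_inj hp _ _ hfun)
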